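/- arXiv:2102.11340 — 3 statements merged into one kernel-verified Lean document; each statement's English description precedes it below -/
import Mathlib

section
/- Let d ∈ ℕ and δ ∈ (0, π). Then N_{d,δ} ≤ ∫_{−π}^{π} |g_{d,δ}(x)| dx ≤ N_{d,δ} + 4π. In particular, if N_{d,δ} > 0 then the normalized function M_{d,δ} = g_{d,δ}/N_{d,δ} satisfies 1 ≤ ∫_{−π}^{π} |M_{d,δ}(x)| dx ≤ 1 + 4π/N_{d,δ}. -/
open Real

/-- `g_{d,δ}(x) = T_d(1 + 2(cos x − cos δ)/(1 + cos δ))`. -/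
noncomputable def chebG (d : ℕ) (δ x : ℝ) : ℝ :=
  (Polynomial.Chebyshev.T ℝ d).eval (1 + 2 * (Real.cos x - Real.cos δ) / (1 + Real.cos δ))

/-- `N_{d,δ} = ∫_{−π}^{π} g_{d,δ}(x) dx`. -/
noncomputable def chebN (d : ℕ) (δ : ℝ) : ℝ := ∫ x in (-π)..π, chebG d δ x

lemma cheb_T_ge_one (n : ℕ) {u : ℝ} (hu : 1 ≤ u) :
    1 ≤ (Polynomial.Chebyshev.T ℝ n).eval u := by
  have key : ∀ n : ℕ, 1 ≤ (Polynomial.Chebyshev.T ℝ n).eval u ∧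
      (Polynomial.Chebyshev.T ℝ n).eval u ≤ (Polynomial.Chebyshev.T ℝ (n + 1)).eval u := by
    intro n
    induction n with
    | zero => simp [Polynomial.Chebyshev.T_zero, Polynomial.Chebyshev.T_one, hu]
    | succ m ih =>
      obtain ⟨h1, h2⟩ := ih
      have hrec : (Polynomial.Chebyshev.T ℝ ((m : ℤ) + 1 + 1)).eval u =
          2 * u * (Polynomial.Chebyshev.T ℝ ((m : ℤ) + 1)).eval u -
            (Polynomial.Chebyshev.T ℝ m).eval u := by
        rw [show ((m : ℤ) + 1 + 1) = (m : ℤ) + 2 from by ring]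
        have := congrArg (Polynomial.eval u) (Polynomial.Chebyshev.T_add_two ℝ (m : ℤ))
        simpa using this
      have h1' : 1 ≤ (Polynomial.Chebyshev.T ℝ ((m : ℤ) + 1)).eval u := le_trans h1 h2
      constructor
      · push_cast
        exact h1'
      · push_cast
        rw [hrec]
        nlinarith
  exact (key n).1

lemma cheb_T_abs_le_one (n : ℕ) {u : ℝ} (h1 : -1 ≤ u) (h2 : u ≤ 1) :
    |(Polynomial.Chebyshev.T ℝ n).eval u| ≤ 1 := by
  have := Real.cos_arccos h1 h2
  rw [← this, Polynomial.Chebyshev.T_real_cos]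
  exact Real.abs_cos_le_one _

theorem stmt_1 (d : ℕ) (δ : ℝ) (hδ : δ ∈ Set.Ioo 0 π) :
    chebN d δ ≤ (∫ x in (-π)..π, |chebG d δ x|) ∧
    (∫ x in (-π)..π, |chebG d δ x|) ≤ chebN d δ + 4 * π ∧
    (0 < chebN d δ →
      1 ≤ (∫ x in (-π)..π, |chebG d δ x / chebN d δ|) ∧
      (∫ x in (-π)..π, |chebG d δ x / chebN d δ|) ≤ 1 + 4 * π / chebN d δ) := by
  obtain ⟨hδ0, hδπ⟩ := hδ
  have hcosδ : -1 < Real.cos δ := by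
    have := Real.cos_lt_cos_of_nonneg_of_le_pi (le_of_lt hδ0) le_rfl hδπ
    simpa using this
  have hden : 0 < 1 + Real.cos δ := by linarith
  -- continuity of chebG d δ
  have hcont : Continuous (chebG d δ) := by
    apply (Polynomial.Chebyshev.T ℝ d).continuous_aeval.comp
    fun_prop
  have hInt : IntervalIntegrable (chebG d δ) MeasureTheory.volume (-π) π :=
    hcont.intervalIntegrable _ _
  have hIntA : IntervalIntegrable (fun x => |chebG d δ x|) MeasureTheory.volume (-π) π :=
    hcont.abs.intervalIntegrable _ _
  have hle : (-π : ℝ) ≤ π := by linarith [Real.pi_pos]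
  -- pointwise bound
  have hpt : ∀ x : ℝ, |chebG d δ x| ≤ chebG d δ x + 2 := by
    intro x
    set u := 1 + 2 * (Real.cos x - Real.cos δ) / (1 + Real.cos δ) with hu
    have hu1 : -1 ≤ u := by
      have h1 : 0 ≤ 1 + Real.cos x := by linarith [Real.neg_one_le_cos x]
      have : u + 1 = 2 * (1 + Real.cos x) / (1 + Real.cos δ) := by
        rw [hu]; field_simp; ring
      have hnn : 0 ≤ 2 * (1 + Real.cos x) / (1 + Real.cos δ) :=
        div_nonneg (by linarith) hden.le
      have h0 : 0 ≤ u + 1 := by rw [this]; exact hnn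
      linarith
    rcases le_or_gt u 1 with h | h
    · have habs := cheb_T_abs_le_one d hu1 h
      have hg1 : -1 ≤ chebG d δ x := by
        have := abs_le.mp habs
        exact this.1
      have : |chebG d δ x| ≤ 1 := habs
      linarith
    · have hg : 1 ≤ chebG d δ x := cheb_T_ge_one d h.le
      rw [abs_of_pos (by linarith)]
      linarith
  -- first inequality
  have hfirst : chebN d δ ≤ ∫ x in (-π)..π, |chebG d δ x| := by
    unfold chebN
    exact intervalIntegral.integral_mono_on hle hInt hIntA (fun x _ => le_abs_self _)
  -- second inequality
  have hsecond : (∫ x in (-π)..π, |chebG d δ x|) ≤ chebN d δ + 4 * π := by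
    have h1 : (∫ x in (-π)..π, |chebG d δ x|) ≤ ∫ x in (-π)..π, (chebG d δ x + 2) := by
      apply intervalIntegral.integral_mono_on hle hIntA
        (hInt.add (intervalIntegrable_const))
      intro x _
      exact hpt x
    have h2 : (∫ x in (-π)..π, (chebG d δ x + 2)) = chebN d δ + 4 * π := by
      rw [intervalIntegral.integral_add hInt intervalIntegrable_const,
        intervalIntegral.integral_const]
      unfold chebN
      simp
      ring
    linarith
  refine ⟨hfirst, hsecond, fun hN => ?_⟩
  have hdiv : (∫ x in (-π)..π, |chebG d δ x / chebN d δ|) =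
      (∫ x in (-π)..π, |chebG d δ x|) / chebN d δ := by
    rw [← intervalIntegral.integral_div]
    congr 1
    ext x
    rw [abs_div, abs_of_pos hN]
  rw [hdiv]
  constructor
  · rw [le_div_iff₀ hN]
    linarith
  · rw [div_le_iff₀ hN]
    have : (1 + 4 * π / chebN d δ) * chebN d δ = chebN d δ + 4 * π := by
      field_simp
    linarith [this ▸ hsecond]
end

section
/- Let δ ∈ (0, π) and let x ∈ ℝ satisfy |x| ≤ δ. Then √((cos x − cos δ)/(1 + cos δ)) ≥ tan(δ/2) · (1 − x²/(4 sin²(δ/2))). -/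
open Real

theorem stmt_3 (δ x : ℝ) (hδ : δ ∈ Set.Ioo 0 π) (hx : |x| ≤ δ) :
    Real.tan (δ / 2) * (1 - x ^ 2 / (4 * Real.sin (δ / 2) ^ 2)) ≤
      Real.sqrt ((Real.cos x - Real.cos δ) / (1 + Real.cos δ)) := by
  obtain ⟨hδ0, hδπ⟩ := hδ
  have hs : 0 < Real.sin (δ / 2) :=
    Real.sin_pos_of_pos_of_lt_pi (by linarith) (by linarith [Real.pi_pos])
  have hc : 0 < Real.cos (δ / 2) :=
    Real.cos_pos_of_mem_Ioo ⟨by linarith [Real.pi_pos], by linarith⟩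
  set s := Real.sin (δ / 2) with hsdef
  set c := Real.cos (δ / 2) with hcdef
  set q := Real.sin (x / 2) with hqdef
  have hpyδ := Real.sin_sq_add_cos_sq (δ / 2)
  have hpyx := Real.sin_sq_add_cos_sq (x / 2)
  rw [← hsdef, ← hcdef] at hpyδ
  rw [← hqdef] at hpyx
  have hcosδ2 : Real.cos δ = c ^ 2 - s ^ 2 := by
    rw [show δ = 2 * (δ / 2) by ring, Real.cos_two_mul', ← hsdef, ← hcdef]
  have hcosδ : Real.cos δ = 1 - 2 * s ^ 2 := by rw [hcosδ2]; linarith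
  have hcosδ' : 1 + Real.cos δ = 2 * c ^ 2 := by rw [hcosδ2]; linarith
  have hcosx : Real.cos x = 1 - 2 * q ^ 2 := by
    rw [show x = 2 * (x / 2) by ring, Real.cos_two_mul', ← hqdef]
    linarith
  have hA : (Real.cos x - Real.cos δ) / (1 + Real.cos δ) = (s ^ 2 - q ^ 2) / c ^ 2 := by
    rw [hcosδ', hcosx, hcosδ]
    rw [show (1 - 2 * q ^ 2 - (1 - 2 * s ^ 2)) = 2 * (s ^ 2 - q ^ 2) by ring,
      mul_div_mul_left _ _ (two_ne_zero)]
  rw [hA]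
  have htan : Real.tan (δ / 2) = s / c := Real.tan_eq_sin_div_cos _
  rcases le_or_gt (Real.tan (δ / 2) * (1 - x ^ 2 / (4 * s ^ 2))) 0 with h | h
  · exact h.trans (Real.sqrt_nonneg _)
  · have htanpos : 0 < Real.tan (δ / 2) := by rw [htan]; positivity
    have hfac : 0 < 1 - x ^ 2 / (4 * s ^ 2) := by
      by_contra hcon
      push_neg at hcon
      nlinarith
    have hx2 : x ^ 2 < 4 * s ^ 2 := by
      have h4s : (0:ℝ) < 4 * s ^ 2 := by positivity
      nlinarith [(div_lt_one h4s).mp (by linarith)]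
    have hq2 : q ^ 2 ≤ x ^ 2 / 4 := by
      have h := Real.sin_sq_le_sq (x := x / 2)
      rw [← hqdef] at h
      nlinarith
    rw [Real.le_sqrt (by positivity), htan,
      show s / c * (1 - x ^ 2 / (4 * s ^ 2)) = (s * (4 * s ^ 2 - x ^ 2)) / (c * (4 * s ^ 2)) by
        field_simp,
      div_pow, div_le_div_iff₀ (by positivity) (by positivity)]
    have t1 : (0:ℝ) ≤ c ^ 2 * s ^ 2 * (x ^ 2 * (4 * s ^ 2 - x ^ 2)) :=
      mul_nonneg (by positivity) (mul_nonneg (sq_nonneg x) (by linarith))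
    have t2 : c ^ 2 * s ^ 2 * (16 * s ^ 2) * q ^ 2 ≤ c ^ 2 * s ^ 2 * (16 * s ^ 2) * (x ^ 2 / 4) :=
      mul_le_mul_of_nonneg_left hq2 (by positivity)
    nlinarith [t1, t2]
    exact div_nonneg (by linarith) (by positivity)
end

section
/- Let d ∈ ℕ, let δ ∈ (0, π/2) satisfy tan(δ/2) ≤ 1 − 1/√2, and let x ∈ ℝ with |x| ≤ δ. Then T_d(1 + 2(cos x − cos δ)/(1 + cos δ)) ≥ (1/2) · e^{√2 · d · tan(δ/2)} · exp(−d x² / (√2 sin δ)). -/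
set_option maxHeartbeats 1000000

open Real

private lemma T_cosh_aux (n : ℤ) (t : ℝ) :
    (Polynomial.Chebyshev.T ℝ n).eval (Real.cosh t) = Real.cosh (n * t) := by
  have h := Polynomial.Chebyshev.T_complex_cos (t * Complex.I) n
  rw [Complex.cos_mul_I] at h
  have h2 : (n : ℂ) * (t * Complex.I) = ((n * t : ℝ) : ℂ) * Complex.I := by push_cast; ring
  rw [h2, Complex.cos_mul_I] at h
  rw [← Complex.ofReal_cosh, ← Complex.ofReal_cosh] at h
  exact_mod_cast h

theorem stmt_4 (d : ℕ) (δ x : ℝ) (hδ : δ ∈ Set.Ioo 0 (π / 2))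
    (htan : Real.tan (δ / 2) ≤ 1 - 1 / Real.sqrt 2) (hx : |x| ≤ δ) :
    (1 / 2) * Real.exp (Real.sqrt 2 * d * Real.tan (δ / 2)) *
        Real.exp (-(d * x ^ 2) / (Real.sqrt 2 * Real.sin δ)) ≤
      (Polynomial.Chebyshev.T ℝ d).eval
        (1 + 2 * (Real.cos x - Real.cos δ) / (1 + Real.cos δ)) := by
  obtain ⟨hδ0, hδπ⟩ := hδ
  have hπ := Real.pi_pos
  have hr2 : Real.sqrt 2 * Real.sqrt 2 = 2 := Real.mul_self_sqrt (by norm_num)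
  have hr2pos : 0 < Real.sqrt 2 := Real.sqrt_pos.mpr (by norm_num)
  have hr2le : Real.sqrt 2 ≤ 1.5 := by nlinarith [sq_nonneg (Real.sqrt 2 - 1.5)]
  have hc2 : 0 < Real.cos (δ / 2) := Real.cos_pos_of_mem_Ioo ⟨by linarith, by linarith⟩
  have hs2 : 0 < Real.sin (δ / 2) := Real.sin_pos_of_pos_of_lt_pi (by linarith) (by linarith)
  have htaneq : Real.tan (δ / 2) = Real.sin (δ / 2) / Real.cos (δ / 2) :=
    Real.tan_eq_sin_div_cos _
  set τ := Real.tan (δ / 2) with hτdef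
  have hτ : 0 < τ := by rw [htaneq]; positivity
  have hsδ : Real.sin δ = 2 * Real.sin (δ / 2) * Real.cos (δ / 2) := by
    rw [show δ = 2 * (δ / 2) by ring, Real.sin_two_mul]; ring_nf
  have hsδ0 : 0 < Real.sin δ := Real.sin_pos_of_pos_of_lt_pi hδ0 (by linarith)
  have hcδ : 0 < Real.cos δ := Real.cos_pos_of_mem_Ioo ⟨by linarith, hδπ⟩
  have h1cδ : 0 < 1 + Real.cos δ := by linarith
  have hc2sq : Real.cos (δ / 2) ^ 2 = (1 + Real.cos δ) / 2 := by
    rw [Real.cos_sq, show 2 * (δ / 2) = δ by ring]; ring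
  have hs2sq : Real.sin (δ / 2) ^ 2 = (1 - Real.cos δ) / 2 := by
    have h := Real.sin_sq_add_cos_sq (δ / 2); rw [hc2sq] at h; linarith
  have hsx2sq : Real.sin (x / 2) ^ 2 = (1 - Real.cos x) / 2 := by
    have h := Real.sin_sq_add_cos_sq (x / 2)
    have h2 : Real.cos (x / 2) ^ 2 = (1 + Real.cos x) / 2 := by
      rw [Real.cos_sq, show 2 * (x / 2) = x by ring]; ring
    rw [h2] at h; linarith
  have hcx : Real.cos δ ≤ Real.cos x := by
    rw [← Real.cos_abs x]
    exact Real.cos_le_cos_of_nonneg_of_le_pi (abs_nonneg x) (by linarith) hx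
  set z := (Real.cos x - Real.cos δ) / (1 + Real.cos δ) with hzdef
  have hz0 : 0 ≤ z := div_nonneg (by linarith) h1cδ.le
  set u := Real.sqrt z with hudef
  have hu0 : 0 ≤ u := Real.sqrt_nonneg z
  have hu2 : u ^ 2 = z := Real.sq_sqrt hz0
  -- key identity: τ² - z = sin(x/2)² / cos(δ/2)²
  have hτ2 : τ ^ 2 = Real.sin (δ / 2) ^ 2 / Real.cos (δ / 2) ^ 2 := by
    rw [htaneq, div_pow]
  have hkey : τ ^ 2 - z = Real.sin (x / 2) ^ 2 / Real.cos (δ / 2) ^ 2 := by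
    rw [hτ2, hzdef, hsx2sq, hs2sq, hc2sq]
    field_simp
    ring
  have hzτ : z ≤ τ ^ 2 := by
    have h0 : 0 ≤ Real.sin (x / 2) ^ 2 / Real.cos (δ / 2) ^ 2 := by positivity
    linarith [hkey ▸ h0]
  have huτ : u ≤ τ := by
    have h := Real.sqrt_le_sqrt hzτ
    rwa [Real.sqrt_sq hτ.le] at h
  -- step (i): 2 sin δ (τ² - z) ≤ τ x²
  have hsinx : Real.sin (x / 2) ^ 2 ≤ (x / 2) ^ 2 := Real.sin_sq_le_sq
  have h4 : 4 * Real.sin (x / 2) ^ 2 ≤ x ^ 2 := by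
    have hq : (x / 2) ^ 2 = x ^ 2 / 4 := by ring
    rw [hq] at hsinx; linarith
  have hstep1 : 2 * Real.sin δ * (τ ^ 2 - z) ≤ τ * x ^ 2 := by
    have hLHS : 2 * Real.sin δ * (τ ^ 2 - z) = τ * (4 * Real.sin (x / 2) ^ 2) := by
      rw [hkey, hsδ, htaneq]
      field_simp
      ring
    rw [hLHS]
    exact mul_le_mul_of_nonneg_left h4 hτ.le
  -- step (ii)
  have h2s : 0 < Real.sqrt 2 * Real.sin δ := by positivity
  have hstep2 : Real.sqrt 2 * (τ ^ 2 - z) / τ ≤ x ^ 2 / (Real.sqrt 2 * Real.sin δ) := by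
    rw [div_le_div_iff₀ hτ h2s]
    have hrw : Real.sqrt 2 * (τ ^ 2 - z) * (Real.sqrt 2 * Real.sin δ) =
        2 * Real.sin δ * (τ ^ 2 - z) := by
      linear_combination (Real.sin δ * (τ ^ 2 - z)) * hr2
    rw [hrw]
    linarith [hstep1]
  -- step (iii): √2 z / τ ≤ 2u/(1+u)
  have hτ' : Real.sqrt 2 * τ ≤ Real.sqrt 2 - 1 := by
    have h := mul_le_mul_of_nonneg_left htan hr2pos.le
    have h2 : Real.sqrt 2 * (1 - 1 / Real.sqrt 2) = Real.sqrt 2 - 1 := by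
      field_simp
    rw [h2] at h
    exact h
  have h1u : (0 : ℝ) < 1 + u := by linarith
  have hstep3 : Real.sqrt 2 * z / τ ≤ 2 * u / (1 + u) := by
    rw [div_le_div_iff₀ hτ h1u, ← hu2]
    have b0 : Real.sqrt 2 * u ≤ Real.sqrt 2 * τ := mul_le_mul_of_nonneg_left huτ hr2pos.le
    have b1 : Real.sqrt 2 * (1 + u) ≤ 2 := by nlinarith
    have b2 : u ^ 2 ≤ u * τ := by nlinarith
    calc Real.sqrt 2 * u ^ 2 * (1 + u) = Real.sqrt 2 * (1 + u) * u ^ 2 := by ring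
      _ ≤ 2 * u ^ 2 := mul_le_mul_of_nonneg_right b1 (sq_nonneg u)
      _ ≤ 2 * (u * τ) := by linarith
      _ = 2 * u * τ := by ring
  -- step (iv): u/(1+u) ≤ log(1+u)
  have hlog : u / (1 + u) ≤ Real.log (1 + u) := by
    have h := Real.log_le_sub_one_of_pos (show (0:ℝ) < (1 + u)⁻¹ by positivity)
    rw [Real.log_inv] at h
    have h2 : u / (1 + u) = 1 - (1 + u)⁻¹ := by field_simp; ring
    rw [h2]; linarith
  -- step (v): log(1+u) ≤ arsinh u
  have harsinh : Real.log (1 + u) ≤ Real.arsinh u := by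
    rw [Real.arsinh]
    apply Real.log_le_log h1u
    have h1 : (1 : ℝ) ≤ Real.sqrt (1 + u ^ 2) := by
      rw [Real.one_le_sqrt]
      nlinarith [sq_nonneg u]
    linarith
  -- combine exponent bound
  have hexp : Real.sqrt 2 * τ - x ^ 2 / (Real.sqrt 2 * Real.sin δ) ≤ 2 * Real.arsinh u := by
    have e1 : Real.sqrt 2 * τ - Real.sqrt 2 * (τ ^ 2 - z) / τ = Real.sqrt 2 * z / τ := by
      field_simp
      ring
    calc Real.sqrt 2 * τ - x ^ 2 / (Real.sqrt 2 * Real.sin δ)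
        ≤ Real.sqrt 2 * τ - Real.sqrt 2 * (τ ^ 2 - z) / τ := by linarith
      _ = Real.sqrt 2 * z / τ := e1
      _ ≤ 2 * u / (1 + u) := hstep3
      _ ≤ 2 * Real.log (1 + u) := by rw [mul_div_assoc]; linarith
      _ ≤ 2 * Real.arsinh u := by linarith
  -- Chebyshev side
  have hy : 1 + 2 * (Real.cos x - Real.cos δ) / (1 + Real.cos δ) =
      Real.cosh (2 * Real.arsinh u) := by
    rw [Real.cosh_two_mul, Real.cosh_sq, Real.sinh_arsinh, hu2, mul_div_assoc, ← hzdef]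
    ring
  rw [hy, T_cosh_aux]
  have hd0 : (0 : ℝ) ≤ (d : ℝ) := Nat.cast_nonneg d
  have hE : (d : ℝ) * (Real.sqrt 2 * τ - x ^ 2 / (Real.sqrt 2 * Real.sin δ)) ≤
      (d : ℝ) * (2 * Real.arsinh u) := mul_le_mul_of_nonneg_left hexp hd0
  have hlhs : (1 / 2 : ℝ) * Real.exp (Real.sqrt 2 * d * τ) *
      Real.exp (-(d * x ^ 2) / (Real.sqrt 2 * Real.sin δ)) =
      Real.exp ((d : ℝ) * (Real.sqrt 2 * τ - x ^ 2 / (Real.sqrt 2 * Real.sin δ))) / 2 := by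
    rw [mul_assoc, ← Real.exp_add, mul_comm ((1:ℝ)/2)]
    rw [show (1/2 : ℝ) = 2⁻¹ by norm_num, div_eq_mul_inv]
    congr 1
    field_simp
    ring
  rw [hlhs]
  have hcast : ((d : ℤ) : ℝ) = (d : ℝ) := by push_cast; rfl
  rw [hcast]
  have hcosh : Real.exp ((d : ℝ) * (2 * Real.arsinh u)) / 2 ≤
      Real.cosh ((d : ℝ) * (2 * Real.arsinh u)) := by
    rw [Real.cosh_eq]
    have := Real.exp_pos (-((d : ℝ) * (2 * Real.arsinh u)))
    linarith
  refine le_trans ?_ hcosh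
  have := Real.exp_le_exp.mpr hE
  linarith
end
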